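/- Let p ≥ 2 be prime, δ ∈ (0,1/4], β ∈ (0,1/2] with β(1-β) = δ, and Δ_α = |α - β|² (distance mod p) for α ∈ ℤ/pℤ. Let B(δ) = {T ∈ ℝ^p : ⟨T,Δ⟩ ≤ δ, Σ_α T_α = 1, T_α ≥ 0 ∀α}. Then the vector w with w₀ = 1-β, w₁ = β, and w_α = 0 otherwise, is the unique minimizer of ⟨T,T⟩ over T ∈ B(δ). -/

import Mathlib

/-- Distance of a real number to the nearest element of `p • ℤ`. -/
noncomputable def dmod (p : ℝ) (x : ℝ) : ℝ := |x - p * round (x / p)|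

lemma dmod_of_small (p x : ℝ) (h1 : -(p/2) ≤ x) (h2 : x < p/2) (hp : 0 < p) :
    dmod p x = |x| := by
  have hr : round (x / p) = 0 := by
    rw [round_eq_zero_iff]
    constructor
    · rw [le_div_iff₀ hp]; linarith
    · rw [div_lt_iff₀ hp]; linarith
  simp [dmod, hr]

set_option maxHeartbeats 1000000
theorem stmt9 (p : ℕ) (hp : p.Prime) (δ β : ℝ)
    (hδ : δ ∈ Set.Ioc (0 : ℝ) (1 / 4)) (hβ : β ∈ Set.Ioc (0 : ℝ) (1 / 2))
    (hβδ : β * (1 - β) = δ) :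
    let Δ : Fin p → ℝ := fun α => (dmod p ((α : ℕ) - β)) ^ 2
    let B : Set (Fin p → ℝ) := {T | ∑ α, T α * Δ α ≤ δ ∧ ∑ α, T α = 1 ∧ ∀ α, 0 ≤ T α}
    let w : Fin p → ℝ := fun α =>
      if (α : ℕ) = 0 then 1 - β else if (α : ℕ) = 1 then β else 0
    w ∈ B ∧ ∀ T ∈ B, T ≠ w → ∑ α, w α * w α < ∑ α, T α * T α := by
  intro Δ B w
  obtain ⟨hδ0, hδ4⟩ := hδ
  obtain ⟨hβ0, hβ2⟩ := hβ
  have hp2 : (2:ℝ) ≤ p := by exact_mod_cast hp.two_le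
  have hppos : (0:ℝ) < p := by linarith
  set a0 : Fin p := ⟨0, hp.pos⟩ with ha0
  set a1 : Fin p := ⟨1, hp.one_lt⟩ with ha1
  have hv0 : ((a0 : Fin p) : ℕ) = 0 := rfl
  have hv1 : ((a1 : Fin p) : ℕ) = 1 := rfl
  have hw0 : w a0 = 1 - β := by simp [w, hv0]
  have hw1 : w a1 = β := by simp [w, hv1]
  -- values of Δ
  have hΔ0 : Δ a0 = β ^ 2 := by
    have : dmod p (((a0 : ℕ) : ℝ) - β) = |(((a0:ℕ):ℝ) - β)| := by
      apply dmod_of_small _ _ (by rw [hv0]; push_cast; nlinarith)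
        (by rw [hv0]; push_cast; nlinarith) hppos
    simp only [Δ]; rw [this, hv0]
    push_cast
    rw [abs_of_nonpos (by linarith)]
    ring
  have hΔ1 : Δ a1 = (1 - β) ^ 2 := by
    have : dmod p (((a1 : ℕ) : ℝ) - β) = |(((a1:ℕ):ℝ) - β)| := by
      apply dmod_of_small _ _ (by rw [hv1]; push_cast; nlinarith)
        (by rw [hv1]; push_cast; nlinarith) hppos
    simp only [Δ]; rw [this, hv1]
    push_cast
    rw [abs_of_nonneg (by linarith)]
  have hΔge : ∀ α : Fin p, (α : ℕ) ≠ 0 → (α : ℕ) ≠ 1 → 1 ≤ Δ α := by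
    intro α h0 h1
    have hα2 : 2 ≤ (α : ℕ) := by omega
    have hα2' : (2:ℝ) ≤ ((α:ℕ):ℝ) := by exact_mod_cast hα2
    have hαp : ((α:ℕ):ℝ) ≤ (p:ℝ) - 1 := by
      have : (α:ℕ) + 1 ≤ p := α.isLt
      have := (Nat.cast_le (α := ℝ)).2 this
      push_cast at this; linarith
    have hd : 1 ≤ dmod p (((α:ℕ):ℝ) - β) := by
      set x : ℝ := ((α:ℕ):ℝ) - β with hx
      set r : ℤ := round (x / (p:ℝ)) with hr
      rcases le_or_gt r 0 with h | h
      · have hpr : (p:ℝ) * (r:ℝ) ≤ 0 :=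
          mul_nonpos_of_nonneg_of_nonpos (le_of_lt hppos) (by exact_mod_cast h)
        calc (1:ℝ) ≤ x - (p:ℝ) * r := by simp only [hx]; nlinarith
          _ ≤ |x - (p:ℝ) * r| := le_abs_self _
      · have h1r : (1:ℝ) ≤ (r:ℝ) := by exact_mod_cast h
        have hpr : (p:ℝ) ≤ (p:ℝ) * (r:ℝ) := by nlinarith
        calc (1:ℝ) ≤ (p:ℝ) * r - x := by simp only [hx]; nlinarith
          _ ≤ |(p:ℝ) * r - x| := le_abs_self _
          _ = |x - (p:ℝ) * r| := abs_sub_comm _ _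
    have hd0 : (0:ℝ) ≤ dmod p (((α:ℕ):ℝ) - β) := abs_nonneg _
    simp only [Δ]
    nlinarith
  have hΔnn : ∀ α : Fin p, 0 ≤ Δ α := fun α => sq_nonneg _
  have hne01 : a0 ≠ a1 := by
    intro h; have := congrArg Fin.val h; simp [hv0, hv1] at this
  -- sum helper
  have hsum : ∀ f : Fin p → ℝ, ∑ α, w α * f α = (1 - β) * f a0 + β * f a1 := by
    intro f
    have hrw : ∀ α : Fin p, w α * f α =
        (if α = a0 then (1 - β) * f α else 0) + (if α = a1 then β * f α else 0) := by
      intro α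
      by_cases h0 : α = a0
      · subst h0; simp [hw0, hne01]
      · by_cases h1 : α = a1
        · subst h1; simp [hw1, Ne.symm hne01]
        · have hn0 : (α : ℕ) ≠ 0 := fun h => h0 (Fin.ext (by simp [hv0, h]))
          have hn1 : (α : ℕ) ≠ 1 := fun h => h1 (Fin.ext (by simp [hv1, h]))
          simp [w, hn0, hn1, h0, h1]
    rw [Finset.sum_congr rfl (fun α _ => hrw α), Finset.sum_add_distrib,
      Finset.sum_ite_eq' Finset.univ a0 (fun α => (1 - β) * f α),
      Finset.sum_ite_eq' Finset.univ a1 (fun α => β * f α)]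
    simp
  have hwΔ : ∑ α, w α * Δ α = δ := by
    rw [hsum Δ, hΔ0, hΔ1]; nlinarith
  have hwsum : ∑ α, w α = 1 := by
    have := hsum (fun _ => 1)
    simpa using this
  have hwnn : ∀ α, 0 ≤ w α := by
    intro α
    simp only [w]
    split_ifs <;> linarith
  have hwB : w ∈ B := ⟨le_of_eq hwΔ, hwsum, hwnn⟩
  refine ⟨hwB, ?_⟩
  rintro T ⟨hTΔ, hTs, hTnn⟩ hTw
  -- multipliers
  set ν : ℝ := 2*β - 2*β^2 - 2 with hν
  set c : Fin p → ℝ := fun α => 2 * Δ α + ν with hc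
  have key : ∀ α : Fin p, w α * w α + c α * w α ≤ T α * T α + c α * T α ∧
      (T α ≠ w α → w α * w α + c α * w α < T α * T α + c α * T α) := by
    intro α
    by_cases h0 : α = a0
    · subst h0
      rw [hw0]
      have : c a0 = -2 * (1 - β) := by simp only [hc, hΔ0, hν]; ring
      rw [this]
      constructor
      · nlinarith [sq_nonneg (T a0 - (1 - β))]
      · intro hne
        have : T a0 - (1 - β) ≠ 0 := sub_ne_zero.2 hne
        nlinarith [pow_two_pos_of_ne_zero this]
    · by_cases h1 : α = a1
      · subst h1
        rw [hw1]
        have : c a1 = -2 * β := by simp only [hc, hΔ1, hν]; ring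
        rw [this]
        constructor
        · nlinarith [sq_nonneg (T a1 - β)]
        · intro hne
          have : T a1 - β ≠ 0 := sub_ne_zero.2 hne
          nlinarith [pow_two_pos_of_ne_zero this]
      · have hn0 : (α : ℕ) ≠ 0 := fun h => h0 (Fin.ext (by simp [hv0, h]))
        have hn1 : (α : ℕ) ≠ 1 := fun h => h1 (Fin.ext (by simp [hv1, h]))
        have hwα : w α = 0 := by simp [w, hn0, hn1]
        have hcα : 0 < c α := by
          have := hΔge α hn0 hn1
          simp only [hc, hν]; nlinarith
        rw [hwα]
        have hT := hTnn α
        constructor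
        · nlinarith
        · intro hne
          have : 0 < T α := lt_of_le_of_ne hT (Ne.symm hne)
          nlinarith
  have hlt : ∑ α, (w α * w α + c α * w α) < ∑ α, (T α * T α + c α * T α) := by
    obtain ⟨α₀, hα₀⟩ := Function.ne_iff.1 hTw
    exact Finset.sum_lt_sum (fun α _ => (key α).1)
      ⟨α₀, Finset.mem_univ _, (key α₀).2 hα₀⟩
  have hcw : ∑ α, c α * w α = 4 * δ - 2 := by
    have h1 : ∑ α, c α * w α = ∑ α, w α * c α :=
      Finset.sum_congr rfl (fun α _ => mul_comm _ _)
    rw [h1, hsum c]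
    have e0 : c a0 = -2 * (1 - β) := by simp only [hc, hΔ0, hν]; ring
    have e1 : c a1 = -2 * β := by simp only [hc, hΔ1, hν]; ring
    rw [e0, e1]; nlinarith
  have hcT : ∑ α, c α * T α ≤ 4 * δ - 2 := by
    have h1 : ∑ α, c α * T α = 2 * (∑ α, T α * Δ α) + ν * (∑ α, T α) := by
      rw [Finset.mul_sum, Finset.mul_sum, ← Finset.sum_add_distrib]
      exact Finset.sum_congr rfl (fun α _ => by simp only [hc]; ring)
    rw [h1, hTs]
    simp only [hν]
    nlinarith
  rw [Finset.sum_add_distrib, Finset.sum_add_distrib] at hlt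
  linarith
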